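/- For a forest F consisting of at least two trees with rightmost tree R_F, and any indices i ≤ j, sim(F, T2[i,j)) = max over k with i ≤ k ≤ j of ( sim(F - R_F, T2[i,k)) + sim(R_F, T2[k,j)) ). Equivalently, S(F) = S(F - R_F) ⋆ S(R_F) where ⋆ is the max-plus matrix product. -/

import Mathlib

/-- Ordered rooted trees with node labels from `α`. -/
inductive Tree' (α : Type) : Type
  | node (label : α) (children : List (Tree' α))

/-- An ordered forest is an ordered list of trees. -/
abbrev Forest (α : Type) := List (Tree' α)

mutual
/-- Number of nodes of a tree. -/
def Tree'.size {α : Type} : Tree' α → ℕ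
  | .node _ cs => 1 + Forest.size cs
/-- Number of nodes of a forest. -/
def Forest.size {α : Type} : Forest α → ℕ
  | [] => 0
  | t :: ts => Tree'.size t + Forest.size ts
end

/-- A single edit operation on a forest: delete a node (promoting its children, in
order, to its parent) or relabel a node. -/
inductive EditStep {α : Type} : Forest α → Forest α → Prop
  | delete (pre : Forest α) (a : α) (cs post : Forest α) :
      EditStep (pre ++ Tree'.node a cs :: post) (pre ++ cs ++ post)
  | relabel (pre : Forest α) (a b : α) (cs post : Forest α) :
      EditStep (pre ++ Tree'.node a cs :: post) (pre ++ Tree'.node b cs :: post)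
  | inside (pre : Forest α) (a : α) {cs cs' : Forest α} (post : Forest α) :
      EditStep cs cs' →
      EditStep (pre ++ Tree'.node a cs :: post) (pre ++ Tree'.node a cs' :: post)

/-- `EditSteps n F G`: `G` is obtained from `F` by exactly `n` edit operations. -/
inductive EditSteps {α : Type} : ℕ → Forest α → Forest α → Prop
  | refl (F : Forest α) : EditSteps 0 F F
  | tail {n : ℕ} {F G H : Forest α} : EditSteps n F G → EditStep G H → EditSteps (n + 1) F H

/-- The (unweighted) tree edit distance: the minimum total number of relabelings
and deletions applied to `F1` and `F2` so that they become identical. -/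
noncomputable def ed {α : Type} (F1 F2 : Forest α) : ℕ :=
  sInf {k | ∃ (k1 k2 : ℕ) (G : Forest α), k = k1 + k2 ∧ EditSteps k1 F1 G ∧ EditSteps k2 F2 G}

/-- The similarity between two forests. -/
noncomputable def sim {α : Type} (F1 F2 : Forest α) : ℤ :=
  (Forest.size F1 : ℤ) + Forest.size F2 - ed F1 F2

mutual
/-- Helper for the subforest operation: the part of tree `t`, whose bi-order
traversal interval starts at position `p`, surviving the restriction to positions `[l, r)`.
A node is kept iff both of its occurrences lie at positions `l, …, r - 1`;
removed nodes have their children promoted. -/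
def cutT {α : Type} (l r p : ℕ) : Tree' α → Forest α
  | .node a cs =>
      if l ≤ p ∧ p + 2 * Tree'.size (Tree'.node a cs) ≤ r then [Tree'.node a cs]
      else cutF l r (p + 1) cs
/-- The part of forest `F`, whose bi-order traversal starts at position `p`,
surviving the restriction to positions `[l, r)`. -/
def cutF {α : Type} (l r p : ℕ) : Forest α → Forest α
  | [] => []
  | t :: ts => cutT l r p t ++ cutF l r (p + 2 * Tree'.size t) ts
end

/-- The subforest `F[l, r)` determined by the interval `[l, r)` of the (1-indexed)
bi-order traversal sequence of `F`. -/
def subforest {α : Type} (F : Forest α) (l r : ℕ) : Forest α := cutF l r 1 F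

/-- `OccF F base p t`: the forest `F`, whose bi-order traversal starts at position `base`,
has a node with subtree `t` whose first occurrence is at position `p`. -/
inductive OccF {α : Type} : Forest α → ℕ → ℕ → Tree' α → Prop
  | head (a : α) (cs ts : Forest α) (base : ℕ) :
      OccF (Tree'.node a cs :: ts) base base (Tree'.node a cs)
  | inChildren {cs : Forest α} {p : ℕ} {t : Tree' α} (a : α) (ts : Forest α) (base : ℕ) :
      OccF cs (base + 1) p t → OccF (Tree'.node a cs :: ts) base p t
  | inRest {ts : Forest α} {p : ℕ} {t : Tree' α} (t0 : Tree' α) (base : ℕ) :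
      OccF ts (base + 2 * Tree'.size t0) p t → OccF (t0 :: ts) base p t

/-- The label of the root of a tree. -/
def Tree'.label {α : Type} : Tree' α → α
  | .node a _ => a

/-- A node occurrence `(p, t)` (first occurrence at position `p`, subtree `t`) is a strict
ancestor of the occurrence `(q, s)`. -/
def Anc {α : Type} (u v : ℕ × Tree' α) : Prop :=
  u.1 < v.1 ∧ v.1 + 2 * Tree'.size v.2 ≤ u.1 + 2 * Tree'.size u.2

/-- The node occurrence `u` precedes the node occurrence `v`: `r(u) ≤ l(v)`. -/
def Prec {α : Type} (u v : ℕ × Tree' α) : Prop :=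
  u.1 + 2 * Tree'.size u.2 ≤ v.1


section Basic
variable {α : Type}

theorem Forest.size_append (F G : Forest α) :
    Forest.size (F ++ G) = Forest.size F + Forest.size G := by
  induction F with
  | nil => simp [Forest.size]
  | cons t ts ih => simp [Forest.size, ih]; ring

theorem EditSteps.trans {m n : ℕ} {F G H : Forest α} (h1 : EditSteps m F G)
    (h2 : EditSteps n G H) : EditSteps (m + n) F H := by
  induction h2 with
  | refl => exact h1
  | tail h s ih => exact (ih h1).tail s

theorem EditSteps.head {n : ℕ} {F G H : Forest α} (s : EditStep F G)
    (h : EditSteps n G H) : EditSteps (n + 1) F H := by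
  have : EditSteps (0 + 1) F G := (EditSteps.refl F).tail s
  simpa [Nat.add_comm] using this.trans h

theorem EditStep.append_left {X X' : Forest α} (P : Forest α) (h : EditStep X X') :
    EditStep (P ++ X) (P ++ X') := by
  cases h with
  | delete pre a cs post =>
      have := EditStep.delete (P ++ pre) a cs post
      simpa [List.append_assoc] using this
  | relabel pre a b cs post =>
      have := EditStep.relabel (P ++ pre) a b cs post
      simpa [List.append_assoc] using this
  | inside pre a post h =>
      have := EditStep.inside (P ++ pre) a post h
      simpa [List.append_assoc] using this

theorem EditStep.append_right {X X' : Forest α} (Q : Forest α) (h : EditStep X X') :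
    EditStep (X ++ Q) (X' ++ Q) := by
  cases h with
  | delete pre a cs post =>
      have := EditStep.delete pre a cs (post ++ Q)
      simpa [List.append_assoc] using this
  | relabel pre a b cs post =>
      have := EditStep.relabel pre a b cs (post ++ Q)
      simpa [List.append_assoc] using this
  | inside pre a post h =>
      have := EditStep.inside pre a (post ++ Q) h
      simpa [List.append_assoc] using this

theorem EditSteps.append_left {n : ℕ} {X X' : Forest α} (P : Forest α)
    (h : EditSteps n X X') : EditSteps n (P ++ X) (P ++ X') := by
  induction h with
  | refl => exact EditSteps.refl _
  | tail h s ih => exact ih.tail (s.append_left P)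

theorem EditSteps.append_right {n : ℕ} {X X' : Forest α} (Q : Forest α)
    (h : EditSteps n X X') : EditSteps n (X ++ Q) (X' ++ Q) := by
  induction h with
  | refl => exact EditSteps.refl _
  | tail h s ih => exact ih.tail (s.append_right Q)

theorem EditSteps.append {m n : ℕ} {X X' Y Y' : Forest α}
    (h1 : EditSteps m X X') (h2 : EditSteps n Y Y') :
    EditSteps (m + n) (X ++ Y) (X' ++ Y') :=
  (h1.append_right Y).trans (h2.append_left X')

theorem EditStep.node_inside {cs cs' : Forest α} (a : α) (h : EditStep cs cs') :
    EditStep [Tree'.node a cs] [Tree'.node a cs'] := by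
  have := EditStep.inside ([] : Forest α) a ([] : Forest α) h
  simpa using this

theorem EditSteps.node_inside {n : ℕ} {cs cs' : Forest α} (a : α) (h : EditSteps n cs cs') :
    EditSteps n [Tree'.node a cs] [Tree'.node a cs'] := by
  induction h with
  | refl => exact EditSteps.refl _
  | tail h s ih => exact ih.tail (s.node_inside a)

theorem editSteps_to_nil : ∀ (F : Forest α), EditSteps (Forest.size F) F [] := by
  intro F
  generalize hn : Forest.size F = n
  induction n using Nat.strong_induction_on generalizing F with
  | _ n ih =>
    cases F with
    | nil => simp [Forest.size] at hn; subst hn; exact EditSteps.refl _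
    | cons t ts =>
      obtain ⟨a, cs⟩ := t
      have hstep : EditStep (Tree'.node a cs :: ts) (cs ++ ts) := by
        have := EditStep.delete ([] : Forest α) a cs ts
        simpa using this
      have hsz : Forest.size (cs ++ ts) + 1 = n := by
        rw [Forest.size_append]
        simp [Forest.size, Tree'.size] at hn
        omega
      have h2 : EditSteps (Forest.size (cs ++ ts)) (cs ++ ts) [] := by
        exact ih _ (by omega) _ rfl
      have := EditSteps.head hstep h2
      rw [hsz] at this
      exact this

theorem ed_le {F H G : Forest α} {k1 k2 : ℕ} (h1 : EditSteps k1 F G) (h2 : EditSteps k2 H G) :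
    ed F H ≤ k1 + k2 :=
  Nat.sInf_le ⟨k1, k2, G, rfl, h1, h2⟩

theorem ed_spec (F H : Forest α) :
    ∃ (k1 k2 : ℕ) (G : Forest α), ed F H = k1 + k2 ∧ EditSteps k1 F G ∧ EditSteps k2 H G := by
  have hne : {k | ∃ (k1 k2 : ℕ) (G : Forest α), k = k1 + k2 ∧ EditSteps k1 F G ∧ EditSteps k2 H G}.Nonempty :=
    ⟨Forest.size F + Forest.size H, Forest.size F, Forest.size H, [], rfl,
      editSteps_to_nil F, editSteps_to_nil H⟩
  exact Nat.sInf_mem hne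

theorem ed_le_steps_right {A C C' : Forest α} {d : ℕ} (h : EditSteps d C C') :
    ed A C ≤ ed A C' + d := by
  obtain ⟨k1, k2, G, he, h1, h2⟩ := ed_spec A C'
  have := ed_le h1 (h.trans h2)
  omega

theorem ed_nil_single (t : Tree' α) : ed [t] [] ≤ Tree'.size t := by
  have := ed_le (editSteps_to_nil [t]) (EditSteps.refl ([] : Forest α))
  simpa [Forest.size] using this
end Basic

section Cut
variable {α : Type}

theorem tree_size_pos (t : Tree' α) : 1 ≤ Tree'.size t := by
  cases t with | node a cs => simp [Tree'.size]

theorem cutF_nil_of_le (l r : ℕ) : ∀ (F : Forest α) (p : ℕ), r ≤ p → cutF l r p F = [] := by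
  intro F
  generalize hn : Forest.size F = n
  induction n using Nat.strong_induction_on generalizing F with
  | _ n ih =>
  intro p hp
  cases F with
  | nil => simp [cutF]
  | cons t ts =>
    obtain ⟨a, cs⟩ := t
    have hsz : (1 + Forest.size cs) + Forest.size ts = n := by
      simpa [Forest.size, Tree'.size] using hn
    have hts : Tree'.size (Tree'.node a cs) = 1 + Forest.size cs := by simp [Tree'.size]
    have h1 : cutT l r p (Tree'.node a cs) = [] := by
      rw [cutT]
      rw [if_neg (by simp [Tree'.size]; omega)]
      exact ih (Forest.size cs) (by omega) cs rfl (p+1) (by omega)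
    rw [cutF, h1]
    simpa using ih (Forest.size ts) (by omega) ts rfl _ (by omega)

theorem cutF_nil_of_ge (l r : ℕ) : ∀ (F : Forest α) (p : ℕ),
    p + 2 * Forest.size F ≤ l → cutF l r p F = [] := by
  intro F
  generalize hn : Forest.size F = n
  induction n using Nat.strong_induction_on generalizing F with
  | _ n ih =>
  intro p hp
  cases F with
  | nil => simp [cutF]
  | cons t ts =>
    obtain ⟨a, cs⟩ := t
    have hsz : (1 + Forest.size cs) + Forest.size ts = n := by
      simpa [Forest.size, Tree'.size] using hn
    have hts : Tree'.size (Tree'.node a cs) = 1 + Forest.size cs := by simp [Tree'.size]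
    rw [← hn] at hp
    simp [Forest.size, Tree'.size] at hp
    have h1 : cutT l r p (Tree'.node a cs) = [] := by
      rw [cutT]
      rw [if_neg (by simp [Tree'.size]; omega)]
      exact ih (Forest.size cs) (by omega) cs rfl (p+1) (by omega)
    rw [cutF, h1]
    simp [Tree'.size]
    exact ih (Forest.size ts) (by omega) ts rfl _ (by omega)

theorem cutF_left_irrel (l l' r : ℕ) : ∀ (F : Forest α) (p : ℕ), l ≤ p → l' ≤ p →
    cutF l r p F = cutF l' r p F := by
  intro F
  generalize hn : Forest.size F = n
  induction n using Nat.strong_induction_on generalizing F with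
  | _ n ih =>
  intro p h1 h2
  cases F with
  | nil => simp [cutF]
  | cons t ts =>
    obtain ⟨a, cs⟩ := t
    have hsz : (1 + Forest.size cs) + Forest.size ts = n := by
      simpa [Forest.size, Tree'.size] using hn
    have hts : Tree'.size (Tree'.node a cs) = 1 + Forest.size cs := by simp [Tree'.size]
    have hT : cutT l r p (Tree'.node a cs) = cutT l' r p (Tree'.node a cs) := by
      rw [cutT, cutT]
      by_cases hc : p + 2 * Tree'.size (Tree'.node a cs) ≤ r
      · rw [if_pos ⟨h1, hc⟩, if_pos ⟨h2, hc⟩]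
      · rw [if_neg (by tauto), if_neg (by tauto)]
        exact ih (Forest.size cs) (by omega) cs rfl (p+1) (by omega) (by omega)
    rw [cutF, cutF, hT]
    congr 1
    exact ih (Forest.size ts) (by omega) ts rfl _ (by omega) (by omega)

theorem cutF_right_irrel (l r r' : ℕ) : ∀ (F : Forest α) (p : ℕ),
    p + 2 * Forest.size F ≤ r → p + 2 * Forest.size F ≤ r' →
    cutF l r p F = cutF l r' p F := by
  intro F
  generalize hn : Forest.size F = n
  induction n using Nat.strong_induction_on generalizing F with
  | _ n ih =>
  intro p h1 h2
  cases F with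
  | nil => simp [cutF]
  | cons t ts =>
    obtain ⟨a, cs⟩ := t
    have hsz : (1 + Forest.size cs) + Forest.size ts = n := by
      simpa [Forest.size, Tree'.size] using hn
    have hts : Tree'.size (Tree'.node a cs) = 1 + Forest.size cs := by simp [Tree'.size]
    rw [← hn] at h1 h2
    simp [Forest.size, Tree'.size] at h1 h2
    have hT : cutT l r p (Tree'.node a cs) = cutT l r' p (Tree'.node a cs) := by
      rw [cutT, cutT]
      by_cases hc : l ≤ p
      · rw [if_pos ⟨hc, by simp [Tree'.size]; omega⟩, if_pos ⟨hc, by simp [Tree'.size]; omega⟩]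
      · rw [if_neg (by tauto), if_neg (by tauto)]
        exact ih (Forest.size cs) (by omega) cs rfl (p+1) (by omega) (by omega)
    rw [cutF, cutF, hT]
    congr 1
    exact ih (Forest.size ts) (by omega) ts rfl _ (by omega) (by omega)

theorem cutF_full (l r : ℕ) : ∀ (F : Forest α) (p : ℕ),
    l ≤ p → p + 2 * Forest.size F ≤ r → cutF l r p F = F := by
  intro F
  generalize hn : Forest.size F = n
  induction n using Nat.strong_induction_on generalizing F with
  | _ n ih =>
  intro p h1 h2
  cases F with
  | nil => simp [cutF]
  | cons t ts =>
    obtain ⟨a, cs⟩ := t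
    have hsz : (1 + Forest.size cs) + Forest.size ts = n := by
      simpa [Forest.size, Tree'.size] using hn
    have hts : Tree'.size (Tree'.node a cs) = 1 + Forest.size cs := by simp [Tree'.size]
    rw [← hn] at h2
    simp [Forest.size, Tree'.size] at h2
    have hT : cutT l r p (Tree'.node a cs) = [Tree'.node a cs] := by
      rw [cutT]
      rw [if_pos ⟨h1, by simp [Tree'.size]; omega⟩]
    rw [cutF, hT]
    have := ih (Forest.size ts) (by omega) ts rfl (p + 2 * Tree'.size (Tree'.node a cs))
      (by simp [Tree'.size]; omega) (by simp [Tree'.size]; omega)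
    simp [this]
end Cut

section CutSplit
variable {α : Type}

theorem cut_split (i k j : ℕ) (hik : i ≤ k) (hkj : k ≤ j) :
    ∀ (F : Forest α) (p : ℕ), ∃ d,
      EditSteps d (cutF i j p F) (cutF i k p F ++ cutF k j p F) ∧
      Forest.size (cutF i j p F) =
        d + Forest.size (cutF i k p F) + Forest.size (cutF k j p F) := by
  intro F
  generalize hn : Forest.size F = n
  induction n using Nat.strong_induction_on generalizing F with
  | _ n ih =>
  intro p
  cases F with
  | nil => exact ⟨0, by simpa [cutF] using EditSteps.refl ([] : Forest α), by simp [cutF, Forest.size]⟩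
  | cons t ts =>
    obtain ⟨a, cs⟩ := t
    have hsz : (1 + Forest.size cs) + Forest.size ts = n := by
      simpa [Forest.size, Tree'.size] using hn
    have hts : Tree'.size (Tree'.node a cs) = 1 + Forest.size cs := by simp [Tree'.size]
    have hszF : Forest.size (Tree'.node a cs :: ts) = n := hn
    by_cases hA : k ≤ p
    · -- whole forest is in the right part
      have e1 : cutF i k p (Tree'.node a cs :: ts) = [] := cutF_nil_of_le i k _ p hA
      have e2 : cutF i j p (Tree'.node a cs :: ts) = cutF k j p (Tree'.node a cs :: ts) :=
        cutF_left_irrel i k j _ p (by omega) hA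
      refine ⟨0, ?_, ?_⟩
      · rw [e1, e2]; simpa using EditSteps.refl _
      · rw [e1, e2]; simp [Forest.size]
    · by_cases hB : p + 2 * Forest.size (Tree'.node a cs :: ts) ≤ k
      · -- whole forest is in the left part
        have e1 : cutF k j p (Tree'.node a cs :: ts) = [] := cutF_nil_of_ge k j _ p hB
        have e2 : cutF i j p (Tree'.node a cs :: ts) = cutF i k p (Tree'.node a cs :: ts) :=
          cutF_right_irrel i j k _ p (by omega) hB
        refine ⟨0, ?_, ?_⟩
        · rw [e1, e2]; simpa using EditSteps.refl _
        · rw [e1, e2]; simp [Forest.size]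
      · push_neg at hB
        set s := Tree'.size (Tree'.node a cs) with hs
        by_cases hC : p + 2 * s ≤ k
        · -- split point inside ts
          have hTeq : cutT i j p (Tree'.node a cs) = cutT i k p (Tree'.node a cs) := by
            rw [cutT, cutT]
            by_cases hip : i ≤ p
            · rw [if_pos ⟨hip, by omega⟩, if_pos ⟨hip, by omega⟩]
            · rw [if_neg (by tauto), if_neg (by tauto)]
              exact cutF_right_irrel i j k cs (p+1) (by omega) (by omega)
          have hTknil : cutT k j p (Tree'.node a cs) = [] := by
            rw [cutT]
            rw [if_neg (by omega)]
            exact cutF_nil_of_ge k j cs (p+1) (by omega)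
          obtain ⟨d, hd, hdsz⟩ := ih (Forest.size ts) (by omega) ts rfl (p + 2 * s)
          refine ⟨d, ?_, ?_⟩
          · rw [cutF, cutF, cutF, ← hs, hTeq, hTknil]
            simp only [List.nil_append]
            rw [List.append_assoc]
            exact hd.append_left _
          · rw [cutF, cutF, cutF, ← hs, hTeq, hTknil]
            simp only [Forest.size_append, Forest.size, List.append_nil]
            omega
        · -- split point inside the head tree
          push_neg at hC
          have hkp : p < k := by omega
          have h1 : cutF i k (p + 2 * s) ts = [] := cutF_nil_of_le i k ts _ (by omega)
          have h2 : cutF i j (p + 2 * s) ts = cutF k j (p + 2 * s) ts :=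
            cutF_left_irrel i k j ts _ (by omega) (by omega)
          have hAeq : cutT i k p (Tree'.node a cs) = cutF i k (p+1) cs := by
            rw [cutT]; rw [if_neg (by rw [← hs]; omega)]
          have hBeq : cutT k j p (Tree'.node a cs) = cutF k j (p+1) cs := by
            rw [cutT]; rw [if_neg (by omega)]
          have hcs : Forest.size cs < n := by omega
          obtain ⟨d'', hd'', hsz''⟩ := ih (Forest.size cs) hcs cs rfl (p+1)
          have htree : ∃ d', EditSteps d' (cutT i j p (Tree'.node a cs))
              (cutT i k p (Tree'.node a cs) ++ cutT k j p (Tree'.node a cs)) ∧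
              Forest.size (cutT i j p (Tree'.node a cs)) =
                d' + Forest.size (cutT i k p (Tree'.node a cs))
                  + Forest.size (cutT k j p (Tree'.node a cs)) := by
            rw [hAeq, hBeq]
            by_cases hc : i ≤ p ∧ p + 2 * s ≤ j
            · have hkept : cutT i j p (Tree'.node a cs) = [Tree'.node a cs] := by
                rw [cutT]; rw [if_pos (by rw [← hs]; exact hc)]
              have hfull : cutF i j (p+1) cs = cs :=
                cutF_full i j cs (p+1) (by omega) (by omega)
              have hstep : EditStep [Tree'.node a cs] cs := by
                have := EditStep.delete ([] : Forest α) a cs ([] : Forest α)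
                simpa using this
              refine ⟨d'' + 1, ?_, ?_⟩
              · rw [hkept]
                exact EditSteps.head hstep (by rw [hfull] at hd''; exact hd'')
              · rw [hkept]
                rw [hfull] at hsz''
                simp [Forest.size, Tree'.size]
                omega
            · have hunkept : cutT i j p (Tree'.node a cs) = cutF i j (p+1) cs := by
                rw [cutT]; rw [if_neg (by rw [← hs]; exact hc)]
              rw [hunkept]
              exact ⟨d'', hd'', hsz''⟩
          obtain ⟨d', hd', hsz'⟩ := htree
          refine ⟨d', ?_, ?_⟩
          · rw [cutF, cutF, cutF, ← hs, h1, h2]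
            simp only [List.append_nil]
            have := hd'.append_right (cutF k j (p + 2*s) ts)
            rw [List.append_assoc] at this
            exact this
          · rw [cutF, cutF, cutF, ← hs, h1, h2]
            simp only [Forest.size_append, Forest.size, List.append_nil]
            omega
end CutSplit

section Upper
variable {α : Type}

theorem ed_append (F1 F2 G1 G2 : Forest α) :
    ed (F1 ++ F2) (G1 ++ G2) ≤ ed F1 G1 + ed F2 G2 := by
  obtain ⟨a1, b1, H1, e1, h11, h12⟩ := ed_spec F1 G1
  obtain ⟨a2, b2, H2, e2, h21, h22⟩ := ed_spec F2 G2
  have := ed_le (h11.append h21) (h12.append h22)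
  omega

theorem sim_upper_bound (T2 ts : Forest α) (t : Tree' α) (i j k : ℕ)
    (hik : i ≤ k) (hkj : k ≤ j) :
    sim ts (subforest T2 i k) + sim [t] (subforest T2 k j) ≤
      sim (ts ++ [t]) (subforest T2 i j) := by
  obtain ⟨d, hd, hdsz⟩ := cut_split i k j hik hkj T2 1
  have h1 : ed (ts ++ [t]) (subforest T2 i j) ≤
      ed (ts ++ [t]) (subforest T2 i k ++ subforest T2 k j) + d :=
    ed_le_steps_right hd
  have h2 : ed (ts ++ [t]) (subforest T2 i k ++ subforest T2 k j) ≤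
      ed ts (subforest T2 i k) + ed [t] (subforest T2 k j) :=
    ed_append ts [t] _ _
  have hsz : Forest.size (ts ++ [t]) = Forest.size ts + Forest.size [t] :=
    Forest.size_append ts [t]
  simp only [sim, subforest] at *
  omega
end Upper

section StepSplit
variable {α : Type}

theorem singleton_eq_append {β : Type} {pre post : List β} {x y : β}
    (h : pre ++ x :: post = [y]) : pre = [] ∧ x = y ∧ post = [] := by
  cases pre with
  | nil => simpa using h
  | cons hd tl =>
    exfalso
    have := congrArg List.length h
    simp at this

theorem append_cons_split {β : Type} :
    ∀ (X : List β) {Y pre post : List β} {m : β}, X ++ Y = pre ++ m :: post →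
      (∃ w, X = pre ++ m :: w ∧ post = w ++ Y) ∨ (∃ w, pre = X ++ w ∧ Y = w ++ m :: post) := by
  intro X
  induction X with
  | nil =>
    intro Y pre post m h
    exact Or.inr ⟨pre, by simp, by simpa using h⟩
  | cons x X' ih =>
    intro Y pre post m h
    cases pre with
    | nil =>
      simp at h
      exact Or.inl ⟨X', by simp [h.1], h.2.symm⟩
    | cons p pre' =>
      simp at h
      rcases ih h.2 with ⟨w, hw1, hw2⟩ | ⟨w, hw1, hw2⟩
      · exact Or.inl ⟨w, by simp [h.1, hw1], hw2⟩
      · exact Or.inr ⟨w, by simp [h.1, hw1], hw2⟩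

theorem editStep_append {X Y G : Forest α} (h : EditStep (X ++ Y) G) :
    (∃ X', EditStep X X' ∧ G = X' ++ Y) ∨ (∃ Y', EditStep Y Y' ∧ G = X ++ Y') := by
  generalize hSY : X ++ Y = S at h
  cases h with
  | delete pre a cs post =>
    rcases append_cons_split X hSY with ⟨w, hw1, hw2⟩ | ⟨w, hw1, hw2⟩
    · refine Or.inl ⟨pre ++ cs ++ w, ?_, ?_⟩
      · rw [hw1]; exact EditStep.delete pre a cs w
      · rw [hw2]; simp
    · refine Or.inr ⟨w ++ cs ++ post, ?_, ?_⟩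
      · rw [hw2]; exact EditStep.delete w a cs post
      · rw [hw1]; simp
  | relabel pre a b cs post =>
    rcases append_cons_split X hSY with ⟨w, hw1, hw2⟩ | ⟨w, hw1, hw2⟩
    · refine Or.inl ⟨pre ++ Tree'.node b cs :: w, ?_, ?_⟩
      · rw [hw1]; exact EditStep.relabel pre a b cs w
      · rw [hw2]; simp
    · refine Or.inr ⟨w ++ Tree'.node b cs :: post, ?_, ?_⟩
      · rw [hw2]; exact EditStep.relabel w a b cs post
      · rw [hw1]; simp
  | inside pre a post hstep =>
    rcases append_cons_split X hSY with ⟨w, hw1, hw2⟩ | ⟨w, hw1, hw2⟩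
    · rename_i cs cs'
      refine Or.inl ⟨pre ++ Tree'.node a cs' :: w, ?_, ?_⟩
      · rw [hw1]; exact EditStep.inside pre a w hstep
      · rw [hw2]; simp
    · rename_i cs cs'
      refine Or.inr ⟨w ++ Tree'.node a cs' :: post, ?_, ?_⟩
      · rw [hw2]; exact EditStep.inside w a post hstep
      · rw [hw1]; simp

theorem editSteps_append_split {n : ℕ} {X Y G : Forest α}
    (h : EditSteps n (X ++ Y) G) :
    ∃ G1 G2 n1 n2, n = n1 + n2 ∧ G = G1 ++ G2 ∧ EditSteps n1 X G1 ∧ EditSteps n2 Y G2 := by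
  generalize hSY : X ++ Y = S at h
  induction h with
  | refl F => exact ⟨X, Y, 0, 0, rfl, hSY.symm, EditSteps.refl X, EditSteps.refl Y⟩
  | tail hsteps hstep ih =>
    obtain ⟨G1, G2, n1, n2, hn, hG, h1, h2⟩ := ih hSY
    subst hG
    rcases editStep_append hstep with ⟨G1', hs, hG'⟩ | ⟨G2', hs, hG'⟩
    · exact ⟨G1', G2, n1 + 1, n2, by omega, hG', h1.tail hs, h2⟩
    · exact ⟨G1, G2', n1, n2 + 1, by omega, hG', h1, h2.tail hs⟩

theorem editStep_singleton {b : α} {c : Forest α} {G : Forest α}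
    (h : EditStep [Tree'.node b c] G) :
    G = c ∨ (∃ b', G = [Tree'.node b' c]) ∨ (∃ c', EditStep c c' ∧ G = [Tree'.node b c']) := by
  generalize hS : [Tree'.node b c] = S at h
  cases h with
  | delete pre a cs post =>
    obtain ⟨h1, h2, h3⟩ := singleton_eq_append hS.symm
    subst h1; subst h3
    cases h2
    simp
  | relabel pre a b' cs post =>
    obtain ⟨h1, h2, h3⟩ := singleton_eq_append hS.symm
    subst h1; subst h3
    cases h2
    exact Or.inr (Or.inl ⟨b', by simp⟩)
  | inside pre a post hstep =>
    obtain ⟨h1, h2, h3⟩ := singleton_eq_append hS.symm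
    subst h1; subst h3
    cases h2
    exact Or.inr (Or.inr ⟨_, hstep, by simp⟩)
end StepSplit

section Marking
open scoped Classical
variable {α : Type}

mutual
/-- A marking of a tree: each node is either kept (with a possibly new label) or dropped. -/
inductive MTree : {α : Type} → Tree' α → Type where
  | drop {α : Type} {a : α} {cs : Forest α} (m : MForest cs) : MTree (Tree'.node a cs)
  | keep {α : Type} {a : α} {cs : Forest α} (b : α) (m : MForest cs) : MTree (Tree'.node a cs)
/-- A marking of a forest. -/
inductive MForest : {α : Type} → Forest α → Type where
  | nil {α : Type} : MForest ([] : Forest α)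
  | cons {α : Type} {t : Tree' α} {ts : Forest α} (mt : MTree t) (mts : MForest ts) :
      MForest (t :: ts)
end

mutual
def restrictT : {t : Tree' α} → MTree t → Forest α
  | _, .drop m => restrictF m
  | _, .keep b m => [Tree'.node b (restrictF m)]
def restrictF : {F : Forest α} → MForest F → Forest α
  | _, .nil => []
  | _, .cons mt mts => restrictT mt ++ restrictF mts
end

mutual
def keptT : {t : Tree' α} → MTree t → ℕ
  | _, .drop m => keptF m
  | _, .keep _ m => 1 + keptF m
def keptF : {F : Forest α} → MForest F → ℕ
  | _, .nil => 0
  | _, .cons mt mts => keptT mt + keptF mts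
end

mutual
noncomputable def badT : {t : Tree' α} → MTree t → ℕ
  | _, .drop m => badF m
  | _, @MTree.keep _ a _ b m => (if b = a then 0 else 1) + badF m
noncomputable def badF : {F : Forest α} → MForest F → ℕ
  | _, .nil => 0
  | _, .cons mt mts => badT mt + badF mts
end

mutual
def SubT : {t : Tree' α} → MTree t → MTree t → Prop
  | _, .drop m', .drop m => SubF m' m
  | _, .drop m', .keep _ m => SubF m' m
  | _, .keep _ m', .keep _ m => SubF m' m
  | _, .keep _ _, .drop _ => False
def SubF : {F : Forest α} → MForest F → MForest F → Prop
  | _, .nil, .nil => True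
  | _, .cons mt' mts', .cons mt mts => SubT mt' mt ∧ SubF mts' mts
end

mutual
noncomputable def diffT : {t : Tree' α} → MTree t → MTree t → ℕ
  | _, .drop m0, .drop m => diffF m0 m
  | _, .keep _ m0, .drop m => 1 + diffF m0 m
  | _, .keep b0 m0, .keep b m => (if b = b0 then 0 else 1) + diffF m0 m
  | _, .drop m0, .keep _ m => diffF m0 m
noncomputable def diffF : {F : Forest α} → MForest F → MForest F → ℕ
  | _, .nil, .nil => 0
  | _, .cons mt0 mts0, .cons mt mts => diffT mt0 mt + diffF mts0 mts
end

mutual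
def OrigT : {t : Tree' α} → MTree t → Prop
  | _, .drop m => OrigF m
  | _, @MTree.keep _ a _ b m => b = a ∧ OrigF m
def OrigF : {F : Forest α} → MForest F → Prop
  | _, .nil => True
  | _, .cons mt mts => OrigT mt ∧ OrigF mts
end

mutual
def fullT : (t : Tree' α) → MTree t
  | .node a cs => .keep a (fullF cs)
def fullF : (F : Forest α) → MForest F
  | [] => .nil
  | t :: ts => .cons (fullT t) (fullF ts)
end

mutual
def emptyT : (t : Tree' α) → MTree t
  | .node _ cs => .drop (emptyF cs)
def emptyF : (F : Forest α) → MForest F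
  | [] => .nil
  | t :: ts => .cons (emptyT t) (emptyF ts)
end

mutual
def cutMT (l r p : ℕ) : (t : Tree' α) → MTree t
  | .node a cs =>
      if l ≤ p ∧ p + 2 * Tree'.size (Tree'.node a cs) ≤ r then .keep a (fullF cs)
      else .drop (cutMF l r (p + 1) cs)
def cutMF (l r p : ℕ) : (F : Forest α) → MForest F
  | [] => .nil
  | t :: ts => .cons (cutMT l r p t) (cutMF l r (p + 2 * Tree'.size t) ts)
end

mutual
def SplitT : {t : Tree' α} → MTree t → MTree t → MTree t → Prop
  | _, .drop m, .drop m1, .drop m2 => SplitF m m1 m2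
  | _, .keep b m, .keep b1 m1, .drop m2 => b1 = b ∧ SplitF m m1 m2
  | _, .keep b m, .drop m1, .keep b2 m2 => b2 = b ∧ SplitF m m1 m2
  | _, .keep _ _, .keep _ _, .keep _ _ => False
  | _, .keep _ _, .drop _, .drop _ => False
  | _, .drop _, .keep _ _, _ => False
  | _, .drop _, _, .keep _ _ => False
def SplitF : {F : Forest α} → MForest F → MForest F → MForest F → Prop
  | _, .nil, .nil, .nil => True
  | _, .cons mt mts, .cons mt1 mts1, .cons mt2 mts2 => SplitT mt mt1 mt2 ∧ SplitF mts mts1 mts2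
end

mutual
def KeptGET (k : ℕ) : ℕ → {t : Tree' α} → MTree t → Prop
  | p, _, .drop m => KeptGEF k (p + 1) m
  | p, _, .keep _ m => k ≤ p ∧ KeptGEF k (p + 1) m
def KeptGEF (k : ℕ) : ℕ → {F : Forest α} → MForest F → Prop
  | _, _, .nil => True
  | p, _, @MForest.cons _ t _ mt mts => KeptGET k p mt ∧ KeptGEF k (p + 2 * Tree'.size t) mts
end

mutual
def KeptLET (k : ℕ) : ℕ → {t : Tree' α} → MTree t → Prop
  | p, _, .drop m => KeptLEF k (p + 1) m
  | p, @Tree'.node _ a cs, .keep _ m =>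
      p + 2 * Tree'.size (Tree'.node a cs) ≤ k ∧ KeptLEF k (p + 1) m
def KeptLEF (k : ℕ) : ℕ → {F : Forest α} → MForest F → Prop
  | _, _, .nil => True
  | p, _, @MForest.cons _ t _ mt mts => KeptLET k p mt ∧ KeptLEF k (p + 2 * Tree'.size t) mts
end

end Marking

section MarkingLemmas
open scoped Classical
variable {α : Type}

theorem restrict_full : ∀ (F : Forest α), restrictF (fullF F) = F := by
  intro F
  generalize hn : Forest.size F = n
  induction n using Nat.strong_induction_on generalizing F with
  | _ n ih =>
  cases F with
  | nil => simp [fullF, restrictF]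
  | cons t ts =>
    obtain ⟨a, cs⟩ := t
    have hsz : (1 + Forest.size cs) + Forest.size ts = n := by
      simpa [Forest.size, Tree'.size] using hn
    simp only [fullF, fullT, restrictF, restrictT]
    rw [ih (Forest.size cs) (by omega) cs rfl, ih (Forest.size ts) (by omega) ts rfl]
    simp

theorem restrict_empty : ∀ (F : Forest α), restrictF (emptyF F) = [] := by
  intro F
  generalize hn : Forest.size F = n
  induction n using Nat.strong_induction_on generalizing F with
  | _ n ih =>
  cases F with
  | nil => simp [emptyF, restrictF]
  | cons t ts =>
    obtain ⟨a, cs⟩ := t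
    have hsz : (1 + Forest.size cs) + Forest.size ts = n := by
      simpa [Forest.size, Tree'.size] using hn
    simp only [emptyF, emptyT, restrictF, restrictT]
    rw [ih (Forest.size cs) (by omega) cs rfl, ih (Forest.size ts) (by omega) ts rfl]
    simp

theorem restrict_cutM (l r : ℕ) : ∀ (F : Forest α) (p : ℕ),
    restrictF (cutMF l r p F) = cutF l r p F := by
  intro F
  generalize hn : Forest.size F = n
  induction n using Nat.strong_induction_on generalizing F with
  | _ n ih =>
  intro p
  cases F with
  | nil => simp [cutMF, restrictF, cutF]
  | cons t ts =>
    obtain ⟨a, cs⟩ := t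
    have hsz : (1 + Forest.size cs) + Forest.size ts = n := by
      simpa [Forest.size, Tree'.size] using hn
    simp only [cutMF, restrictF, cutF]
    congr 1
    · rw [cutMT, cutT]
      by_cases hc : l ≤ p ∧ p + 2 * Tree'.size (Tree'.node a cs) ≤ r
      · rw [if_pos hc, if_pos hc]
        simp [restrictT, restrict_full]
      · rw [if_neg hc, if_neg hc]
        simp only [restrictT]
        exact ih (Forest.size cs) (by omega) cs rfl (p + 1)
    · exact ih (Forest.size ts) (by omega) ts rfl _

theorem kept_restrict : ∀ (F : Forest α) (M : MForest F),
    Forest.size (restrictF M) = keptF M := by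
  intro F
  generalize hn : Forest.size F = n
  induction n using Nat.strong_induction_on generalizing F with
  | _ n ih =>
  intro M
  cases F with
  | nil => cases M; simp [restrictF, keptF, Forest.size]
  | cons t ts =>
    obtain ⟨a, cs⟩ := t
    cases M with
    | cons mt mts =>
    have hsz : (1 + Forest.size cs) + Forest.size ts = n := by
      simpa [Forest.size, Tree'.size] using hn
    simp only [restrictF, keptF, Forest.size_append]
    have h2 : Forest.size (restrictF mts) = keptF mts := ih (Forest.size ts) (by omega) ts rfl mts
    cases mt with
    | drop m =>
      have h1 := ih (Forest.size cs) (by omega) cs rfl m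
      simp only [restrictT, keptT]
      omega
    | keep b m =>
      have h1 := ih (Forest.size cs) (by omega) cs rfl m
      simp only [restrictT, keptT, Forest.size, Tree'.size]
      omega

theorem sub_full : ∀ (F : Forest α) (M : MForest F), SubF M (fullF F) := by
  intro F
  generalize hn : Forest.size F = n
  induction n using Nat.strong_induction_on generalizing F with
  | _ n ih =>
  intro M
  cases F with
  | nil => cases M; simp [fullF, SubF]
  | cons t ts =>
    obtain ⟨a, cs⟩ := t
    cases M with
    | cons mt mts =>
    have hsz : (1 + Forest.size cs) + Forest.size ts = n := by
      simpa [Forest.size, Tree'.size] using hn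
    refine ⟨?_, ih (Forest.size ts) (by omega) ts rfl mts⟩
    cases mt with
    | drop m => exact ih (Forest.size cs) (by omega) cs rfl m
    | keep b m => exact ih (Forest.size cs) (by omega) cs rfl m

theorem sub_trans : ∀ (F : Forest α) (M2 M1 M0 : MForest F),
    SubF M2 M1 → SubF M1 M0 → SubF M2 M0 := by
  intro F
  generalize hn : Forest.size F = n
  induction n using Nat.strong_induction_on generalizing F with
  | _ n ih =>
  intro M2 M1 M0 h21 h10
  cases F with
  | nil => cases M2; cases M1; cases M0; trivial
  | cons t ts =>
    obtain ⟨a, cs⟩ := t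
    cases M2 with | cons mt2 mts2 =>
    cases M1 with | cons mt1 mts1 =>
    cases M0 with | cons mt0 mts0 =>
    have hsz : (1 + Forest.size cs) + Forest.size ts = n := by
      simpa [Forest.size, Tree'.size] using hn
    obtain ⟨ht21, hts21⟩ := h21
    obtain ⟨ht10, hts10⟩ := h10
    refine ⟨?_, ih (Forest.size ts) (by omega) ts rfl _ _ _ hts21 hts10⟩
    cases mt2 with
    | drop m2 =>
      cases mt1 with
      | drop m1 =>
        cases mt0 with
        | drop m0 => exact ih (Forest.size cs) (by omega) cs rfl _ _ _ ht21 ht10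
        | keep b0 m0 => exact ih (Forest.size cs) (by omega) cs rfl _ _ _ ht21 ht10
      | keep b1 m1 =>
        cases mt0 with
        | drop m0 => exact absurd ht10 (by simp [SubT])
        | keep b0 m0 => exact ih (Forest.size cs) (by omega) cs rfl _ _ _ ht21 ht10
    | keep b2 m2 =>
      cases mt1 with
      | drop m1 => exact absurd ht21 (by simp [SubT])
      | keep b1 m1 =>
        cases mt0 with
        | drop m0 => exact absurd ht10 (by simp [SubT])
        | keep b0 m0 => exact ih (Forest.size cs) (by omega) cs rfl _ _ _ ht21 ht10
end MarkingLemmas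

section MarkingLemmas2
open scoped Classical
variable {α : Type}

theorem diff_triangle : ∀ (F : Forest α) (M2 M1 M0 : MForest F),
    SubF M2 M1 → SubF M1 M0 → diffF M0 M2 ≤ diffF M0 M1 + diffF M1 M2 := by
  intro F
  generalize hn : Forest.size F = n
  induction n using Nat.strong_induction_on generalizing F with
  | _ n ih =>
  intro M2 M1 M0 h21 h10
  cases F with
  | nil => cases M2; cases M1; cases M0; simp [diffF]
  | cons t ts =>
    obtain ⟨a, cs⟩ := t
    cases M2 with | cons mt2 mts2 =>
    cases M1 with | cons mt1 mts1 =>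
    cases M0 with | cons mt0 mts0 =>
    have hsz : (1 + Forest.size cs) + Forest.size ts = n := by
      simpa [Forest.size, Tree'.size] using hn
    obtain ⟨ht21, hts21⟩ := h21
    obtain ⟨ht10, hts10⟩ := h10
    have htail := ih (Forest.size ts) (by omega) ts rfl _ _ _ hts21 hts10
    simp only [diffF]
    have hhead : diffT mt0 mt2 ≤ diffT mt0 mt1 + diffT mt1 mt2 := by
      cases mt2 with
      | drop m2 =>
        cases mt1 with
        | drop m1 =>
          cases mt0 with
          | drop m0 =>
            simpa [diffT] using ih (Forest.size cs) (by omega) cs rfl _ _ _ ht21 ht10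
          | keep b0 m0 =>
            have := ih (Forest.size cs) (by omega) cs rfl _ _ _ ht21 ht10
            simp [diffT]; omega
        | keep b1 m1 =>
          cases mt0 with
          | drop m0 => exact absurd ht10 (by simp [SubT])
          | keep b0 m0 =>
            have := ih (Forest.size cs) (by omega) cs rfl _ _ _ ht21 ht10
            simp [diffT]; split_ifs <;> omega
      | keep b2 m2 =>
        cases mt1 with
        | drop m1 => exact absurd ht21 (by simp [SubT])
        | keep b1 m1 =>
          cases mt0 with
          | drop m0 => exact absurd ht10 (by simp [SubT])
          | keep b0 m0 =>
            have := ih (Forest.size cs) (by omega) cs rfl _ _ _ ht21 ht10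
            simp only [diffT]
            by_cases e1 : b1 = b0 <;> by_cases e2 : b2 = b1 <;>
              split_ifs <;> simp_all <;> omega
    omega

theorem diff_eq : ∀ (F : Forest α) (M M0 : MForest F),
    OrigF M0 → SubF M M0 → diffF M0 M + keptF M = keptF M0 + badF M := by
  intro F
  generalize hn : Forest.size F = n
  induction n using Nat.strong_induction_on generalizing F with
  | _ n ih =>
  intro M M0 horig hsub
  cases F with
  | nil => cases M; cases M0; simp [diffF, keptF, badF]
  | cons t ts =>
    obtain ⟨a, cs⟩ := t
    cases M with | cons mt mts =>
    cases M0 with | cons mt0 mts0 =>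
    have hsz : (1 + Forest.size cs) + Forest.size ts = n := by
      simpa [Forest.size, Tree'.size] using hn
    obtain ⟨hot, hof⟩ := horig
    obtain ⟨hst, hsf⟩ := hsub
    have htail := ih (Forest.size ts) (by omega) ts rfl _ _ hof hsf
    simp only [diffF, keptF, badF]
    have hhead : diffT mt0 mt + keptT mt = keptT mt0 + badT mt := by
      cases mt with
      | drop m =>
        cases mt0 with
        | drop m0 =>
          have := ih (Forest.size cs) (by omega) cs rfl _ _ hot hst
          simp only [diffT, keptT, badT]; omega
        | keep b0 m0 =>
          obtain ⟨hb0, hom⟩ := hot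
          have := ih (Forest.size cs) (by omega) cs rfl _ _ hom hst
          simp only [diffT, keptT, badT]; omega
      | keep b m =>
        cases mt0 with
        | drop m0 => exact absurd hst (by simp [SubT])
        | keep b0 m0 =>
          obtain ⟨hb0, hom⟩ := hot
          subst hb0
          have := ih (Forest.size cs) (by omega) cs rfl _ _ hom hst
          simp only [diffT, keptT, badT]
          split_ifs <;> omega
    omega

theorem orig_full : ∀ (F : Forest α), OrigF (fullF F) := by
  intro F
  generalize hn : Forest.size F = n
  induction n using Nat.strong_induction_on generalizing F with
  | _ n ih =>
  cases F with
  | nil => simp [fullF, OrigF]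
  | cons t ts =>
    obtain ⟨a, cs⟩ := t
    have hsz : (1 + Forest.size cs) + Forest.size ts = n := by
      simpa [Forest.size, Tree'.size] using hn
    exact ⟨⟨rfl, ih (Forest.size cs) (by omega) cs rfl⟩, ih (Forest.size ts) (by omega) ts rfl⟩

theorem orig_cutM (l r : ℕ) : ∀ (F : Forest α) (p : ℕ), OrigF (cutMF l r p F) := by
  intro F
  generalize hn : Forest.size F = n
  induction n using Nat.strong_induction_on generalizing F with
  | _ n ih =>
  intro p
  cases F with
  | nil => simp [cutMF, OrigF]
  | cons t ts =>
    obtain ⟨a, cs⟩ := t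
    have hsz : (1 + Forest.size cs) + Forest.size ts = n := by
      simpa [Forest.size, Tree'.size] using hn
    refine ⟨?_, ih (Forest.size ts) (by omega) ts rfl _⟩
    rw [cutMT]
    by_cases hc : l ≤ p ∧ p + 2 * Tree'.size (Tree'.node a cs) ≤ r
    · rw [if_pos hc]; exact ⟨rfl, orig_full cs⟩
    · rw [if_neg hc]; exact ih (Forest.size cs) (by omega) cs rfl _

theorem split_kept_bad : ∀ (F : Forest α) (M M1 M2 : MForest F), SplitF M M1 M2 →
    keptF M = keptF M1 + keptF M2 ∧ badF M = badF M1 + badF M2 ∧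
      SubF M1 M ∧ SubF M2 M := by
  intro F
  generalize hn : Forest.size F = n
  induction n using Nat.strong_induction_on generalizing F with
  | _ n ih =>
  intro M M1 M2 hs
  cases F with
  | nil => cases M; cases M1; cases M2; simp [keptF, badF, SubF]
  | cons t ts =>
    obtain ⟨a, cs⟩ := t
    cases M with | cons mt mts =>
    cases M1 with | cons mt1 mts1 =>
    cases M2 with | cons mt2 mts2 =>
    have hsz : (1 + Forest.size cs) + Forest.size ts = n := by
      simpa [Forest.size, Tree'.size] using hn
    obtain ⟨hst, hsf⟩ := hs
    obtain ⟨k2, b2', s21, s22⟩ := ih (Forest.size ts) (by omega) ts rfl _ _ _ hsf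
    have hhead : keptT mt = keptT mt1 + keptT mt2 ∧ badT mt = badT mt1 + badT mt2 ∧
        SubT mt1 mt ∧ SubT mt2 mt := by
      cases mt with
      | drop m =>
        cases mt1 with
        | drop m1 =>
          cases mt2 with
          | drop m2 =>
            obtain ⟨q1, q2, q3, q4⟩ := ih (Forest.size cs) (by omega) cs rfl _ _ _ hst
            simp only [keptT, badT, SubT]
            exact ⟨q1, q2, q3, q4⟩
          | keep b2 m2 => exact absurd hst (by simp [SplitT])
        | keep b1 m1 =>
          cases mt2 with
          | drop m2 => exact absurd hst (by simp [SplitT])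
          | keep b2 m2 => exact absurd hst (by simp [SplitT])
      | keep b m =>
        cases mt1 with
        | drop m1 =>
          cases mt2 with
          | drop m2 => exact absurd hst (by simp [SplitT])
          | keep b2 m2 =>
            obtain ⟨hb, hsp⟩ := hst
            subst hb
            obtain ⟨q1, q2, q3, q4⟩ := ih (Forest.size cs) (by omega) cs rfl _ _ _ hsp
            simp only [keptT, badT, SubT]
            refine ⟨by omega, by omega, q3, q4⟩
        | keep b1 m1 =>
          cases mt2 with
          | drop m2 =>
            obtain ⟨hb, hsp⟩ := hst
            subst hb
            obtain ⟨q1, q2, q3, q4⟩ := ih (Forest.size cs) (by omega) cs rfl _ _ _ hsp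
            simp only [keptT, badT, SubT]
            refine ⟨by omega, by omega, q3, q4⟩
          | keep b2 m2 => exact absurd hst (by simp [SplitT])
    simp only [keptF, badF, SubF]
    exact ⟨by omega, by omega, ⟨hhead.2.2.1, s21⟩, ⟨hhead.2.2.2, s22⟩⟩

theorem split_empty_left : ∀ (F : Forest α) (M : MForest F), SplitF M (emptyF F) M := by
  intro F
  generalize hn : Forest.size F = n
  induction n using Nat.strong_induction_on generalizing F with
  | _ n ih =>
  intro M
  cases F with
  | nil => cases M; simp [emptyF, SplitF]
  | cons t ts =>
    obtain ⟨a, cs⟩ := t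
    cases M with | cons mt mts =>
    have hsz : (1 + Forest.size cs) + Forest.size ts = n := by
      simpa [Forest.size, Tree'.size] using hn
    refine ⟨?_, ih (Forest.size ts) (by omega) ts rfl mts⟩
    cases mt with
    | drop m => exact ih (Forest.size cs) (by omega) cs rfl m
    | keep b m => exact ⟨rfl, ih (Forest.size cs) (by omega) cs rfl m⟩

theorem split_empty_right : ∀ (F : Forest α) (M : MForest F), SplitF M M (emptyF F) := by
  intro F
  generalize hn : Forest.size F = n
  induction n using Nat.strong_induction_on generalizing F with
  | _ n ih =>
  intro M
  cases F with
  | nil => cases M; simp [emptyF, SplitF]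
  | cons t ts =>
    obtain ⟨a, cs⟩ := t
    cases M with | cons mt mts =>
    have hsz : (1 + Forest.size cs) + Forest.size ts = n := by
      simpa [Forest.size, Tree'.size] using hn
    refine ⟨?_, ih (Forest.size ts) (by omega) ts rfl mts⟩
    cases mt with
    | drop m => exact ih (Forest.size cs) (by omega) cs rfl m
    | keep b m => exact ⟨rfl, ih (Forest.size cs) (by omega) cs rfl m⟩
end MarkingLemmas2

section MarkingLemmas3
open scoped Classical
variable {α : Type}

theorem keptGE_self (k : ℕ) : ∀ (F : Forest α) (p : ℕ) (M : MForest F), k ≤ p →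
    KeptGEF k p M := by
  intro F
  generalize hn : Forest.size F = n
  induction n using Nat.strong_induction_on generalizing F with
  | _ n ih =>
  intro p M hk
  cases F with
  | nil => cases M; simp [KeptGEF]
  | cons t ts =>
    obtain ⟨a, cs⟩ := t
    cases M with | cons mt mts =>
    have hsz : (1 + Forest.size cs) + Forest.size ts = n := by
      simpa [Forest.size, Tree'.size] using hn
    refine ⟨?_, ih (Forest.size ts) (by omega) ts rfl _ mts (by omega)⟩
    cases mt with
    | drop m => exact ih (Forest.size cs) (by omega) cs rfl _ m (by omega)
    | keep b m => exact ⟨hk, ih (Forest.size cs) (by omega) cs rfl _ m (by omega)⟩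

theorem keptLE_self (k : ℕ) : ∀ (F : Forest α) (p : ℕ) (M : MForest F),
    p + 2 * Forest.size F ≤ k → KeptLEF k p M := by
  intro F
  generalize hn : Forest.size F = n
  induction n using Nat.strong_induction_on generalizing F with
  | _ n ih =>
  intro p M hk
  cases F with
  | nil => cases M; simp [KeptLEF]
  | cons t ts =>
    obtain ⟨a, cs⟩ := t
    cases M with | cons mt mts =>
    have hsz : (1 + Forest.size cs) + Forest.size ts = n := by
      simpa [Forest.size, Tree'.size] using hn
    have hts : Tree'.size (Tree'.node a cs) = 1 + Forest.size cs := by simp [Tree'.size]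
    refine ⟨?_, ih (Forest.size ts) (by omega) ts rfl _ mts (by rw [hts]; omega)⟩
    cases mt with
    | drop m => exact ih (Forest.size cs) (by omega) cs rfl _ m (by omega)
    | keep b m =>
      exact ⟨by rw [hts]; omega, ih (Forest.size cs) (by omega) cs rfl _ m (by omega)⟩

theorem keptGE_mono : ∀ (F : Forest α) (p k : ℕ) (M M' : MForest F),
    SubF M M' → KeptGEF k p M' → KeptGEF k p M := by
  intro F
  generalize hn : Forest.size F = n
  induction n using Nat.strong_induction_on generalizing F with
  | _ n ih =>
  intro p k M M' hsub hge
  cases F with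
  | nil => cases M; simp [KeptGEF]
  | cons t ts =>
    obtain ⟨a, cs⟩ := t
    cases M with | cons mt mts =>
    cases M' with | cons mt' mts' =>
    have hsz : (1 + Forest.size cs) + Forest.size ts = n := by
      simpa [Forest.size, Tree'.size] using hn
    obtain ⟨hs1, hs2⟩ := hsub
    obtain ⟨hg1, hg2⟩ := hge
    refine ⟨?_, ih (Forest.size ts) (by omega) ts rfl _ _ _ _ hs2 hg2⟩
    cases mt with
    | drop m =>
      cases mt' with
      | drop m' => exact ih (Forest.size cs) (by omega) cs rfl _ _ _ _ hs1 hg1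
      | keep b' m' => exact ih (Forest.size cs) (by omega) cs rfl _ _ _ _ hs1 hg1.2
    | keep b m =>
      cases mt' with
      | drop m' => exact absurd hs1 (by simp [SubT])
      | keep b' m' =>
        exact ⟨hg1.1, ih (Forest.size cs) (by omega) cs rfl _ _ _ _ hs1 hg1.2⟩

theorem keptLE_mono : ∀ (F : Forest α) (p k : ℕ) (M M' : MForest F),
    SubF M M' → KeptLEF k p M' → KeptLEF k p M := by
  intro F
  generalize hn : Forest.size F = n
  induction n using Nat.strong_induction_on generalizing F with
  | _ n ih =>
  intro p k M M' hsub hge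
  cases F with
  | nil => cases M; simp [KeptLEF]
  | cons t ts =>
    obtain ⟨a, cs⟩ := t
    cases M with | cons mt mts =>
    cases M' with | cons mt' mts' =>
    have hsz : (1 + Forest.size cs) + Forest.size ts = n := by
      simpa [Forest.size, Tree'.size] using hn
    obtain ⟨hs1, hs2⟩ := hsub
    obtain ⟨hg1, hg2⟩ := hge
    refine ⟨?_, ih (Forest.size ts) (by omega) ts rfl _ _ _ _ hs2 hg2⟩
    cases mt with
    | drop m =>
      cases mt' with
      | drop m' => exact ih (Forest.size cs) (by omega) cs rfl _ _ _ _ hs1 hg1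
      | keep b' m' => exact ih (Forest.size cs) (by omega) cs rfl _ _ _ _ hs1 hg1.2
    | keep b m =>
      cases mt' with
      | drop m' => exact absurd hs1 (by simp [SubT])
      | keep b' m' =>
        exact ⟨hg1.1, ih (Forest.size cs) (by omega) cs rfl _ _ _ _ hs1 hg1.2⟩

theorem cut_within_ge (l r : ℕ) : ∀ (F : Forest α) (p : ℕ),
    KeptGEF l p (cutMF l r p F) := by
  intro F
  generalize hn : Forest.size F = n
  induction n using Nat.strong_induction_on generalizing F with
  | _ n ih =>
  intro p
  cases F with
  | nil => simp [cutMF, KeptGEF]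
  | cons t ts =>
    obtain ⟨a, cs⟩ := t
    have hsz : (1 + Forest.size cs) + Forest.size ts = n := by
      simpa [Forest.size, Tree'.size] using hn
    refine ⟨?_, ih (Forest.size ts) (by omega) ts rfl _⟩
    rw [cutMT]
    by_cases hc : l ≤ p ∧ p + 2 * Tree'.size (Tree'.node a cs) ≤ r
    · rw [if_pos hc]
      exact ⟨hc.1, keptGE_self l cs _ _ (by omega)⟩
    · rw [if_neg hc]
      exact ih (Forest.size cs) (by omega) cs rfl _

theorem cut_within_le (l r : ℕ) : ∀ (F : Forest α) (p : ℕ),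
    KeptLEF r p (cutMF l r p F) := by
  intro F
  generalize hn : Forest.size F = n
  induction n using Nat.strong_induction_on generalizing F with
  | _ n ih =>
  intro p
  cases F with
  | nil => simp [cutMF, KeptLEF]
  | cons t ts =>
    obtain ⟨a, cs⟩ := t
    have hsz : (1 + Forest.size cs) + Forest.size ts = n := by
      simpa [Forest.size, Tree'.size] using hn
    have hts : Tree'.size (Tree'.node a cs) = 1 + Forest.size cs := by simp [Tree'.size]
    refine ⟨?_, ih (Forest.size ts) (by omega) ts rfl _⟩
    rw [cutMT]
    by_cases hc : l ≤ p ∧ p + 2 * Tree'.size (Tree'.node a cs) ≤ r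
    · rw [if_pos hc]
      exact ⟨hc.2, keptLE_self r cs _ _ (by omega)⟩
    · rw [if_neg hc]
      exact ih (Forest.size cs) (by omega) cs rfl _

theorem clampL (i j k : ℕ) : ∀ (F : Forest α) (p : ℕ) (M : MForest F),
    KeptLEF k p M → KeptLEF j p M → KeptGEF i p M → KeptLEF (max i (min k j)) p M := by
  intro F
  generalize hn : Forest.size F = n
  induction n using Nat.strong_induction_on generalizing F with
  | _ n ih =>
  intro p M h1 h2 h3
  cases F with
  | nil => cases M; simp [KeptLEF]
  | cons t ts =>
    obtain ⟨a, cs⟩ := t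
    cases M with | cons mt mts =>
    have hsz : (1 + Forest.size cs) + Forest.size ts = n := by
      simpa [Forest.size, Tree'.size] using hn
    refine ⟨?_, ih (Forest.size ts) (by omega) ts rfl _ mts h1.2 h2.2 h3.2⟩
    cases mt with
    | drop m => exact ih (Forest.size cs) (by omega) cs rfl _ m h1.1 h2.1 h3.1
    | keep b m =>
      obtain ⟨hb1, hm1⟩ := h1.1
      obtain ⟨hb2, hm2⟩ := h2.1
      obtain ⟨hb3, hm3⟩ := h3.1
      exact ⟨by omega, ih (Forest.size cs) (by omega) cs rfl _ m hm1 hm2 hm3⟩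

theorem clampR (i j k : ℕ) : ∀ (F : Forest α) (p : ℕ) (M : MForest F),
    KeptGEF k p M → KeptGEF i p M → KeptLEF j p M → KeptGEF (max i (min k j)) p M := by
  intro F
  generalize hn : Forest.size F = n
  induction n using Nat.strong_induction_on generalizing F with
  | _ n ih =>
  intro p M h1 h2 h3
  cases F with
  | nil => cases M; simp [KeptGEF]
  | cons t ts =>
    obtain ⟨a, cs⟩ := t
    cases M with | cons mt mts =>
    have hsz : (1 + Forest.size cs) + Forest.size ts = n := by
      simpa [Forest.size, Tree'.size] using hn
    refine ⟨?_, ih (Forest.size ts) (by omega) ts rfl _ mts h1.2 h2.2 h3.2⟩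
    cases mt with
    | drop m => exact ih (Forest.size cs) (by omega) cs rfl _ m h1.1 h2.1 h3.1
    | keep b m =>
      obtain ⟨hb1, hm1⟩ := h1.1
      obtain ⟨hb2, hm2⟩ := h2.1
      obtain ⟨hb3, hm3⟩ := h3.1
      have hts : 1 ≤ Tree'.size (Tree'.node a cs) := tree_size_pos _
      exact ⟨by omega, ih (Forest.size cs) (by omega) cs rfl _ m hm1 hm2 hm3⟩

theorem kept_ge_le_sub (i k : ℕ) : ∀ (F : Forest α) (p : ℕ) (M : MForest F),
    KeptGEF i p M → KeptLEF k p M → SubF M (cutMF i k p F) := by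
  intro F
  generalize hn : Forest.size F = n
  induction n using Nat.strong_induction_on generalizing F with
  | _ n ih =>
  intro p M hge hle
  cases F with
  | nil => cases M; simp [cutMF, SubF]
  | cons t ts =>
    obtain ⟨a, cs⟩ := t
    cases M with | cons mt mts =>
    have hsz : (1 + Forest.size cs) + Forest.size ts = n := by
      simpa [Forest.size, Tree'.size] using hn
    refine ⟨?_, ih (Forest.size ts) (by omega) ts rfl _ mts hge.2 hle.2⟩
    cases mt with
    | drop m =>
      rw [cutMT]
      by_cases hc : i ≤ p ∧ p + 2 * Tree'.size (Tree'.node a cs) ≤ k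
      · rw [if_pos hc]
        exact sub_full cs m
      · rw [if_neg hc]
        exact ih (Forest.size cs) (by omega) cs rfl _ m hge.1 hle.1
    | keep b m =>
      rw [cutMT]
      obtain ⟨hbg, hmg⟩ := hge.1
      obtain ⟨hbl, hml⟩ := hle.1
      rw [if_pos ⟨hbg, hbl⟩]
      exact sub_full cs m
end MarkingLemmas3

section MarkingLemmas4
open scoped Classical
variable {α : Type}

theorem sub_refl : ∀ (F : Forest α) (M : MForest F), SubF M M := by
  intro F
  generalize hn : Forest.size F = n
  induction n using Nat.strong_induction_on generalizing F with
  | _ n ih =>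
  intro M
  cases F with
  | nil => cases M; trivial
  | cons t ts =>
    obtain ⟨a, cs⟩ := t
    cases M with | cons mt mts =>
    have hsz : (1 + Forest.size cs) + Forest.size ts = n := by
      simpa [Forest.size, Tree'.size] using hn
    refine ⟨?_, ih (Forest.size ts) (by omega) ts rfl mts⟩
    cases mt with
    | drop m => exact ih (Forest.size cs) (by omega) cs rfl m
    | keep b m => exact ih (Forest.size cs) (by omega) cs rfl m

theorem diff_refl : ∀ (F : Forest α) (M : MForest F), diffF M M = 0 := by
  intro F
  generalize hn : Forest.size F = n
  induction n using Nat.strong_induction_on generalizing F with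
  | _ n ih =>
  intro M
  cases F with
  | nil => cases M; simp [diffF]
  | cons t ts =>
    obtain ⟨a, cs⟩ := t
    cases M with | cons mt mts =>
    have hsz : (1 + Forest.size cs) + Forest.size ts = n := by
      simpa [Forest.size, Tree'.size] using hn
    have h2 := ih (Forest.size ts) (by omega) ts rfl mts
    simp only [diffF]
    cases mt with
    | drop m =>
      have h1 := ih (Forest.size cs) (by omega) cs rfl m
      simp only [diffT]; omega
    | keep b m =>
      have h1 := ih (Forest.size cs) (by omega) cs rfl m
      simp only [diffT]; simp [h1, h2]

theorem keptGE_empty (k : ℕ) : ∀ (F : Forest α) (p : ℕ), KeptGEF k p (emptyF F) := by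
  intro F
  generalize hn : Forest.size F = n
  induction n using Nat.strong_induction_on generalizing F with
  | _ n ih =>
  intro p
  cases F with
  | nil => simp [emptyF, KeptGEF]
  | cons t ts =>
    obtain ⟨a, cs⟩ := t
    have hsz : (1 + Forest.size cs) + Forest.size ts = n := by
      simpa [Forest.size, Tree'.size] using hn
    exact ⟨ih (Forest.size cs) (by omega) cs rfl _, ih (Forest.size ts) (by omega) ts rfl _⟩

theorem keptLE_empty (k : ℕ) : ∀ (F : Forest α) (p : ℕ), KeptLEF k p (emptyF F) := by
  intro F
  generalize hn : Forest.size F = n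
  induction n using Nat.strong_induction_on generalizing F with
  | _ n ih =>
  intro p
  cases F with
  | nil => simp [emptyF, KeptLEF]
  | cons t ts =>
    obtain ⟨a, cs⟩ := t
    have hsz : (1 + Forest.size cs) + Forest.size ts = n := by
      simpa [Forest.size, Tree'.size] using hn
    exact ⟨ih (Forest.size cs) (by omega) cs rfl _, ih (Forest.size ts) (by omega) ts rfl _⟩

theorem keptLET_self (k : ℕ) {t : Tree' α} (mt : MTree t) (p : ℕ)
    (h : p + 2 * Tree'.size t ≤ k) : KeptLET k p mt := by
  obtain ⟨a, cs⟩ := t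
  have hts : Tree'.size (Tree'.node a cs) = 1 + Forest.size cs := by simp [Tree'.size]
  cases mt with
  | drop m => exact keptLE_self k cs (p+1) m (by omega)
  | keep b m => exact ⟨h, keptLE_self k cs (p+1) m (by omega)⟩

theorem keptGET_self (k : ℕ) {t : Tree' α} (mt : MTree t) (p : ℕ) (h : k ≤ p) :
    KeptGET k p mt := by
  obtain ⟨a, cs⟩ := t
  cases mt with
  | drop m => exact keptGE_self k cs (p+1) m (by omega)
  | keep b m => exact ⟨h, keptGE_self k cs (p+1) m (by omega)⟩

theorem splitT_empty_right {t : Tree' α} (mt : MTree t) : SplitT mt mt (emptyT t) := by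
  obtain ⟨a, cs⟩ := t
  cases mt with
  | drop m => exact split_empty_right cs m
  | keep b m => exact ⟨rfl, split_empty_right cs m⟩

theorem restrictT_emptyT (t : Tree' α) : restrictT (emptyT t) = [] := by
  obtain ⟨a, cs⟩ := t
  simp only [emptyT, restrictT]
  exact restrict_empty cs

theorem keptGET_empty (k : ℕ) (t : Tree' α) (p : ℕ) : KeptGET k p (emptyT t) := by
  obtain ⟨a, cs⟩ := t
  exact keptGE_empty k cs (p+1)

theorem editStep_nil {G : Forest α} (h : EditStep ([] : Forest α) G) : False := by
  generalize hS : ([] : Forest α) = S at h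
  cases h with
  | delete pre a cs post => simp at hS
  | relabel pre a b cs post => simp at hS
  | inside pre a post hstep => simp at hS

theorem sub_script : ∀ (F : Forest α) (M M' : MForest F), SubF M' M →
    EditSteps (diffF M M') (restrictF M) (restrictF M') := by
  intro F
  generalize hn : Forest.size F = n
  induction n using Nat.strong_induction_on generalizing F with
  | _ n ih =>
  intro M M' hsub
  cases F with
  | nil => cases M; cases M'; simpa [diffF, restrictF] using EditSteps.refl ([] : Forest α)
  | cons t ts =>
    obtain ⟨a, cs⟩ := t
    cases M with | cons mt mts =>
    cases M' with | cons mt' mts' =>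
    have hsz : (1 + Forest.size cs) + Forest.size ts = n := by
      simpa [Forest.size, Tree'.size] using hn
    obtain ⟨hst, hsf⟩ := hsub
    have htail := ih (Forest.size ts) (by omega) ts rfl mts mts' hsf
    have hhead : EditSteps (diffT mt mt') (restrictT mt) (restrictT mt') := by
      cases mt with
      | drop m =>
        cases mt' with
        | drop m' =>
          simpa [diffT, restrictT] using ih (Forest.size cs) (by omega) cs rfl m m' hst
        | keep b' m' => exact absurd hst (by simp [SubT])
      | keep b m =>
        cases mt' with
        | drop m' =>
          have h1 := ih (Forest.size cs) (by omega) cs rfl m m' hst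
          have h2 : EditSteps (diffF m m') [Tree'.node b (restrictF m)]
              [Tree'.node b (restrictF m')] := h1.node_inside b
          have hdel : EditStep [Tree'.node b (restrictF m')] (restrictF m') := by
            have := EditStep.delete ([] : Forest α) b (restrictF m') ([] : Forest α)
            simpa using this
          have := h2.tail hdel
          simp only [diffT, restrictT]
          rw [Nat.add_comm]
          exact this
        | keep b' m' =>
          have h1 := ih (Forest.size cs) (by omega) cs rfl m m' hst
          have h2 : EditSteps (diffF m m') [Tree'.node b (restrictF m)]
              [Tree'.node b (restrictF m')] := h1.node_inside b
          by_cases hb : b' = b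
          · subst hb
            simp only [diffT, restrictT, if_pos rfl]
            simpa using h2
          · have hrel : EditStep [Tree'.node b (restrictF m')] [Tree'.node b' (restrictF m')] := by
              have := EditStep.relabel ([] : Forest α) b b' (restrictF m') ([] : Forest α)
              simpa using this
            have := h2.tail hrel
            simp only [diffT, restrictT, if_neg hb]
            rw [Nat.add_comm]
            exact this
    simpa [diffF, restrictF] using hhead.append htail

theorem step_invert : ∀ (F : Forest α) (M : MForest F) (G : Forest α),
    EditStep (restrictF M) G →
    ∃ M', SubF M' M ∧ restrictF M' = G ∧ diffF M M' ≤ 1 := by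
  intro F
  generalize hn : Forest.size F = n
  induction n using Nat.strong_induction_on generalizing F with
  | _ n ih =>
  intro M G hstep
  cases F with
  | nil =>
    cases M
    exact absurd hstep (by intro h; exact editStep_nil (by simpa [restrictF] using h))
  | cons t ts =>
    obtain ⟨a, cs⟩ := t
    cases M with | cons mt mts =>
    have hsz : (1 + Forest.size cs) + Forest.size ts = n := by
      simpa [Forest.size, Tree'.size] using hn
    have hre : restrictF (MForest.cons mt mts) = restrictT mt ++ restrictF mts := rfl
    rw [hre] at hstep
    rcases editStep_append hstep with ⟨X', hs, hG⟩ | ⟨Y', hs, hG⟩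
    · -- step inside the head tree part
      have hmt : ∃ mt', SubT mt' mt ∧ restrictT mt' = X' ∧ diffT mt mt' ≤ 1 := by
        cases mt with
        | drop m =>
          obtain ⟨m', hsub, hres, hdiff⟩ := ih (Forest.size cs) (by omega) cs rfl m X'
            (by simpa [restrictT] using hs)
          exact ⟨MTree.drop m', hsub, hres, hdiff⟩
        | keep b m =>
          have hs' : EditStep [Tree'.node b (restrictF m)] X' := by
            simpa [restrictT] using hs
          rcases editStep_singleton hs' with hdel | ⟨b', hrel⟩ | ⟨c', hin, hinG⟩
          · exact ⟨MTree.drop m, sub_refl cs m, by simp [restrictT, hdel],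
              by simp [diffT, diff_refl]⟩
          · exact ⟨MTree.keep b' m, sub_refl cs m, by simp [restrictT, hrel],
              by simp [diffT, diff_refl]; split_ifs <;> omega⟩
          · obtain ⟨m', hsub, hres, hdiff⟩ := ih (Forest.size cs) (by omega) cs rfl m c' hin
            refine ⟨MTree.keep b m', hsub, by simp [restrictT, hres, hinG], ?_⟩
            simp only [diffT, if_true]
            omega
      obtain ⟨mt', h1, h2, h3⟩ := hmt
      refine ⟨MForest.cons mt' mts, ⟨h1, sub_refl ts mts⟩, ?_, ?_⟩
      · rw [hG]; simp [restrictF, h2]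
      · simp only [diffF]
        have := diff_refl ts mts
        omega
    · -- step inside the tail part
      obtain ⟨mts', h1, h2, h3⟩ := ih (Forest.size ts) (by omega) ts rfl mts Y' hs
      refine ⟨MForest.cons mt mts', ⟨?_, h1⟩, ?_, ?_⟩
      · cases mt with
        | drop m => exact sub_refl cs m
        | keep b m => exact sub_refl cs m
      · rw [hG]; simp [restrictF, h2]
      · simp only [diffF]
        have hd : diffT mt mt = 0 := by
          cases mt with
          | drop m => simpa [diffT] using diff_refl cs m
          | keep b m => simp [diffT, diff_refl cs m]
        omega

theorem steps_invert {n : ℕ} {F : Forest α} {M0 : MForest F} {G : Forest α}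
    (h : EditSteps n (restrictF M0) G) :
    ∃ M, SubF M M0 ∧ restrictF M = G ∧ diffF M0 M ≤ n := by
  generalize hS : restrictF M0 = S at h
  induction h with
  | refl X => exact ⟨M0, sub_refl F M0, hS, by simp [diff_refl]⟩
  | tail hsteps hstep ihh =>
    obtain ⟨M, h1, h2, h3⟩ := ihh hS
    obtain ⟨M', h1', h2', h3'⟩ := step_invert F M _ (by rw [h2]; exact hstep)
    refine ⟨M', sub_trans F M' M M0 h1' h1, h2', ?_⟩
    have := diff_triangle F M' M M0 h1' h1
    omega
end MarkingLemmas4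

section SplitExists
open scoped Classical
variable {α : Type}

theorem append_split {β : Type} :
    ∀ (X : List β) {Y G1 G2 : List β}, X ++ Y = G1 ++ G2 →
      (∃ w, G1 = X ++ w ∧ Y = w ++ G2) ∨ (∃ w, X = G1 ++ w ∧ G2 = w ++ Y) := by
  intro X
  induction X with
  | nil =>
    intro Y G1 G2 h
    exact Or.inl ⟨G1, by simp, by simpa using h⟩
  | cons x X' ih =>
    intro Y G1 G2 h
    cases G1 with
    | nil =>
      exact Or.inr ⟨x :: X', by simp, by simpa using h.symm⟩
    | cons g G1' =>
      simp at h
      rcases ih h.2 with ⟨w, hw1, hw2⟩ | ⟨w, hw1, hw2⟩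
      · exact Or.inl ⟨w, by simp [h.1, hw1], hw2⟩
      · exact Or.inr ⟨w, by simp [h.1, hw1], hw2⟩

theorem split_exists : ∀ (F : Forest α) (M : MForest F) (p : ℕ) (G1 G2 : Forest α),
    restrictF M = G1 ++ G2 →
    ∃ (k : ℕ) (M1 M2 : MForest F), p ≤ k ∧ k ≤ p + 2 * Forest.size F ∧ SplitF M M1 M2 ∧
      restrictF M1 = G1 ∧ restrictF M2 = G2 ∧ KeptLEF k p M1 ∧ KeptGEF k p M2 := by
  intro F
  generalize hn : Forest.size F = n
  induction n using Nat.strong_induction_on generalizing F with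
  | _ n ih =>
  intro M p G1 G2 h
  by_cases hG1 : G1 = []
  · subst hG1
    refine ⟨p, emptyF F, M, le_refl p, by omega, split_empty_left F M,
      restrict_empty F, by simpa using h, keptLE_empty p F p, keptGE_self p F p M (le_refl p)⟩
  by_cases hG2 : G2 = []
  · subst hG2
    refine ⟨p + 2 * Forest.size F, M, emptyF F, by omega, by omega, split_empty_right F M,
      by simpa using h, restrict_empty F, keptLE_self _ F p M (by omega),
      keptGE_empty _ F p⟩
  cases F with
  | nil =>
    cases M
    simp only [restrictF] at h
    exact absurd (List.append_eq_nil_iff.mp h.symm).1 hG1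
  | cons t ts =>
    obtain ⟨a, cs⟩ := t
    cases M with | cons mt mts =>
    have hsz : (1 + Forest.size cs) + Forest.size ts = n := by
      simpa [Forest.size, Tree'.size] using hn
    have hts : Tree'.size (Tree'.node a cs) = 1 + Forest.size cs := by simp [Tree'.size]
    have hszF : Forest.size (Tree'.node a cs :: ts) =
        Tree'.size (Tree'.node a cs) + Forest.size ts := by simp [Forest.size]
    have hre : restrictF (MForest.cons mt mts) = restrictT mt ++ restrictF mts := rfl
    rw [hre] at h
    rcases append_split (restrictT mt) h with ⟨w, hw1, hw2⟩ | ⟨w, hw1, hw2⟩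
    · -- split point inside the tail
      obtain ⟨k, m1, m2, hk1, hk2, hsp, hr1, hr2, hle, hge⟩ :=
        ih (Forest.size ts) (by omega) ts rfl mts (p + 2 * Tree'.size (Tree'.node a cs)) w G2 hw2
      refine ⟨k, MForest.cons mt m1, MForest.cons (emptyT _) m2,
        by omega, by omega, ⟨splitT_empty_right mt, hsp⟩, ?_, ?_, ?_, ?_⟩
      · show restrictT mt ++ restrictF m1 = G1
        rw [hr1, hw1]
      · show restrictT (emptyT _) ++ restrictF m2 = G2
        rw [restrictT_emptyT, hr2]; simp
      · exact ⟨keptLET_self k mt p (by omega), hle⟩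
      · exact ⟨keptGET_empty k _ p, hge⟩
    · -- split point inside the head tree
      cases mt with
      | keep b m =>
        -- restrictT (keep b m) is a singleton, and G1 ≠ [], so G1 is the whole tree
        have hsing : restrictT (@MTree.keep α a cs b m) = [Tree'.node b (restrictF m)] := by
          simp [restrictT]
        rw [hsing] at hw1
        have : G1 = [Tree'.node b (restrictF m)] ∧ w = [] := by
          cases G1 with
          | nil => exact absurd rfl hG1
          | cons g G1' =>
            simp at hw1
            obtain ⟨hg, hG1', hwnil⟩ := hw1
            exact ⟨by simp [hg, hG1'], hwnil⟩
        obtain ⟨hg1, hwnil⟩ := this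
        subst hwnil
        refine ⟨p + 2 * Tree'.size (Tree'.node a cs), MForest.cons (MTree.keep b m) (emptyF ts),
          MForest.cons (emptyT _) mts, by omega, by omega,
          ⟨splitT_empty_right _, split_empty_left ts mts⟩, ?_, ?_, ?_, ?_⟩
        · show restrictT (MTree.keep b m) ++ restrictF (emptyF ts) = G1
          rw [restrict_empty, hsing, hg1]; simp
        · show restrictT (emptyT _) ++ restrictF mts = G2
          rw [restrictT_emptyT, hw2]
        · exact ⟨keptLET_self _ _ p (by omega), keptLE_empty _ ts _⟩
        · exact ⟨keptGET_empty _ _ p, keptGE_self _ ts _ mts (by omega)⟩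
      | drop m =>
        have hsing : restrictT (@MTree.drop α a cs m) = restrictF m := by simp [restrictT]
        rw [hsing] at hw1
        obtain ⟨k, m1, m2, hk1, hk2, hsp, hr1, hr2, hle, hge⟩ :=
          ih (Forest.size cs) (by omega) cs rfl m (p + 1) G1 w hw1
        refine ⟨k, MForest.cons (MTree.drop m1) (emptyF ts),
          MForest.cons (MTree.drop m2) mts, by omega, by omega,
          ⟨hsp, split_empty_left ts mts⟩, ?_, ?_, ?_, ?_⟩
        · show restrictT (MTree.drop m1) ++ restrictF (emptyF ts) = G1
          rw [restrict_empty]; simpa [restrictT] using hr1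
        · show restrictT (MTree.drop m2) ++ restrictF mts = G2
          rw [hw2]; simpa [restrictT] using hr2
        · exact ⟨hle, keptLE_empty _ ts _⟩
        · exact ⟨hge, keptGE_self _ ts _ mts (by omega)⟩
end SplitExists

section Final
open scoped Classical
variable {α : Type}

theorem sim_lower (T2 ts : Forest α) (t : Tree' α) (i j : ℕ) (hij : i ≤ j) :
    ∃ k, i ≤ k ∧ k ≤ j ∧
      sim (ts ++ [t]) (subforest T2 i j) ≤
        sim ts (subforest T2 i k) + sim [t] (subforest T2 k j) := by
  obtain ⟨x, y, G, hed, hx, hy⟩ := ed_spec (ts ++ [t]) (subforest T2 i j)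
  obtain ⟨G1, G2, x1, x2, hxsum, hGsplit, hx1, hx2⟩ := editSteps_append_split hx
  have hy' : EditSteps y (restrictF (cutMF i j 1 T2)) G := by
    rw [restrict_cutM]; exact hy
  obtain ⟨Mb, hsubb, hresb, hdiffb⟩ := steps_invert hy'
  rw [hGsplit] at hresb
  obtain ⟨k0, M1, M2, _, _, hsp, hr1, hr2, hle0, hge0⟩ := split_exists T2 Mb 1 G1 G2 hresb
  refine ⟨max i (min k0 j), le_max_left _ _, by omega, ?_⟩
  set k := max i (min k0 j) with hk
  obtain ⟨hkept, hbad, hsub1, hsub2⟩ := split_kept_bad T2 Mb M1 M2 hsp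
  have hsub1' : SubF M1 (cutMF i j 1 T2) := sub_trans _ _ _ _ hsub1 hsubb
  have hsub2' : SubF M2 (cutMF i j 1 T2) := sub_trans _ _ _ _ hsub2 hsubb
  have hge_i_1 : KeptGEF i 1 M1 := keptGE_mono _ _ _ _ _ hsub1' (cut_within_ge i j T2 1)
  have hle_j_1 : KeptLEF j 1 M1 := keptLE_mono _ _ _ _ _ hsub1' (cut_within_le i j T2 1)
  have hge_i_2 : KeptGEF i 1 M2 := keptGE_mono _ _ _ _ _ hsub2' (cut_within_ge i j T2 1)
  have hle_j_2 : KeptLEF j 1 M2 := keptLE_mono _ _ _ _ _ hsub2' (cut_within_le i j T2 1)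
  have hle_k_1 : KeptLEF k 1 M1 := clampL i j k0 T2 1 M1 hle0 hle_j_1 hge_i_1
  have hge_k_2 : KeptGEF k 1 M2 := clampR i j k0 T2 1 M2 hge0 hge_i_2 hle_j_2
  have hsubM1 : SubF M1 (cutMF i k 1 T2) := kept_ge_le_sub i k T2 1 M1 hge_i_1 hle_k_1
  have hsubM2 : SubF M2 (cutMF k j 1 T2) := kept_ge_le_sub k j T2 1 M2 hge_k_2 hle_j_2
  have hscript1 : EditSteps (diffF (cutMF i k 1 T2) M1) (subforest T2 i k) G1 := by
    have := sub_script T2 (cutMF i k 1 T2) M1 hsubM1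
    rw [restrict_cutM, hr1] at this
    exact this
  have hscript2 : EditSteps (diffF (cutMF k j 1 T2) M2) (subforest T2 k j) G2 := by
    have := sub_script T2 (cutMF k j 1 T2) M2 hsubM2
    rw [restrict_cutM, hr2] at this
    exact this
  have hedL : ed ts (subforest T2 i k) ≤ x1 + diffF (cutMF i k 1 T2) M1 :=
    ed_le hx1 hscript1
  have hedR : ed [t] (subforest T2 k j) ≤ x2 + diffF (cutMF k j 1 T2) M2 :=
    ed_le hx2 hscript2
  have h5a := diff_eq T2 M1 (cutMF i k 1 T2) (orig_cutM i k T2 1) hsubM1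
  have h5b := diff_eq T2 M2 (cutMF k j 1 T2) (orig_cutM k j T2 1) hsubM2
  have h5c := diff_eq T2 Mb (cutMF i j 1 T2) (orig_cutM i j T2 1) hsubb
  have s_ij : keptF (cutMF i j 1 T2) = Forest.size (subforest T2 i j) := by
    have := kept_restrict T2 (cutMF i j 1 T2)
    rw [restrict_cutM] at this
    exact this.symm
  have s_ik : keptF (cutMF i k 1 T2) = Forest.size (subforest T2 i k) := by
    have := kept_restrict T2 (cutMF i k 1 T2)
    rw [restrict_cutM] at this
    exact this.symm
  have s_kj : keptF (cutMF k j 1 T2) = Forest.size (subforest T2 k j) := by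
    have := kept_restrict T2 (cutMF k j 1 T2)
    rw [restrict_cutM] at this
    exact this.symm
  have hsz : Forest.size (ts ++ [t]) = Forest.size ts + Forest.size [t] :=
    Forest.size_append ts [t]
  simp only [sim]
  omega

end Final

/-- For a forest with at least two trees and rightmost tree `t`,
`sim(F, T2[i,j)) = max_{i ≤ k ≤ j} ( sim(F - R_F, T2[i,k)) + sim(R_F, T2[k,j)) )`;
this is the max-plus product identity `S(F) = S(F - R_F) ⋆ S(R_F)`. -/
theorem sim_maxplus_decomposition {α : Type} (T2 : Forest α) (ts : Forest α) (t : Tree' α)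
    (hts : ts ≠ []) (i j : ℕ) (hi : 1 ≤ i) (hij : i ≤ j)
    (hj : j ≤ 2 * Forest.size T2 + 1) :
    IsGreatest {x : ℤ | ∃ k, i ≤ k ∧ k ≤ j ∧
        x = sim ts (subforest T2 i k) + sim [t] (subforest T2 k j)}
      (sim (ts ++ [t]) (subforest T2 i j)) := by
  constructor
  · obtain ⟨k, hik, hkj, hlow⟩ := sim_lower T2 ts t i j hij
    exact ⟨k, hik, hkj, le_antisymm hlow (sim_upper_bound T2 ts t i j k hik hkj)⟩
  · rintro x ⟨k, hik, hkj, rfl⟩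
    exact sim_upper_bound T2 ts t i j k hik hkj
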